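/- Let B be an n×n matrix with nonnegative entries and spectral radius ρ(B) < 1, let γ ≥ 0, let (c_i) be a sequence in R^n with c_i → c, and let (x_i) be a sequence of vectors in [0,1]^n satisfying, entrywise for all i ≥ 1, B x_{i−1} + c_i − γ·1 ⪯ x_i ⪯ B x_{i−1} + c_i + γ·1. Then, entrywise, limsup_{i→∞} x_i ⪯ (I − B)^{-1} c + γ (I − B)^{-1} 1 and liminf_{i→∞} x_i ⪰ (I − B)^{-1} c − γ (I − B)^{-1} 1, where 1 is the all-ones vector and limsup/liminf of vector sequences are taken entrywise. -/

import Mathlib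

open Filter Matrix

attribute [local instance] Matrix.linftyOpNormedAddCommGroup Matrix.linftyOpNormedRing
  Matrix.linftyOpNormedAlgebra

private lemma stmt13_le_add {a b : ℝ} (h : ∀ ε : ℝ, 0 < ε → a ≤ b + ε) : a ≤ b := by
  by_contra hcon
  push_neg at hcon
  have := h ((a - b)/2) (by linarith)
  linarith

private lemma stmt13_map_pow {n : ℕ} (B : Matrix (Fin n) (Fin n) ℝ) (k : ℕ) :
    (B.map (Complex.ofReal ·))^k = (B^k).map (Complex.ofReal ·) := by
  have := map_pow (Complex.ofRealHom.mapMatrix (m := Fin n)) B k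
  simpa [RingHom.mapMatrix_apply, Complex.ofRealHom] using this.symm

private lemma stmt13_pow_tendsto {n : ℕ} [Nonempty (Fin n)] (B : Matrix (Fin n) (Fin n) ℝ)
    (hBspec : ∀ z ∈ spectrum ℂ (B.map (Complex.ofReal ·)), ‖z‖ < 1) (j l : Fin n) :
    Tendsto (fun k => (B^k) j l) atTop (nhds 0) := by
  set A := B.map (Complex.ofReal ·) with hA
  have hρ : spectralRadius ℂ A < 1 := by
    have := spectrum.spectralRadius_lt_of_forall_lt A (r := 1)
      (fun z hz => by simpa [← NNReal.coe_lt_coe, coe_nnnorm] using hBspec z hz)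
    simpa using this
  obtain ⟨r, hr1, hr2⟩ := exists_between hρ
  have hgel := spectrum.pow_nnnorm_pow_one_div_tendsto_nhds_spectralRadius A
  have hev : ∀ᶠ k : ℕ in atTop, (‖A ^ k‖₊ : ENNReal) ^ (1 / (k:ℝ)) < r :=
    hgel.eventually_lt_const hr1
  have hrne : r ≠ ⊤ := (hr2.trans (by norm_num)).ne
  set s : ℝ := r.toReal with hs
  have hs1 : s < 1 := by
    have := (ENNReal.toReal_lt_toReal hrne (by norm_num)).mpr hr2
    simpa using this
  have hs0 : 0 ≤ s := ENNReal.toReal_nonneg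
  have hev2 : ∀ᶠ k : ℕ in atTop, |(B^k) j l| ≤ s ^ k := by
    filter_upwards [hev, eventually_ge_atTop 1] with k hk hk1
    have hAk : (‖A ^ k‖₊ : ENNReal) ≤ r ^ k := by
      have h1 : ((‖A ^ k‖₊ : ENNReal) ^ (1 / (k:ℝ))) ^ (k:ℝ) ≤ r ^ (k:ℝ) :=
        ENNReal.rpow_le_rpow hk.le (by positivity)
      have hkne : (k:ℝ) ≠ 0 := Nat.cast_ne_zero.mpr (by omega)
      calc (‖A ^ k‖₊ : ENNReal) = ((‖A ^ k‖₊ : ENNReal) ^ (1/(k:ℝ))) ^ (k:ℝ) := by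
            rw [← ENNReal.rpow_mul, one_div, inv_mul_cancel₀ hkne, ENNReal.rpow_one]
        _ ≤ r ^ (k:ℝ) := h1
        _ = r ^ k := ENNReal.rpow_natCast r k
    have hnorm : ‖A ^ k‖ ≤ s ^ k := by
      have := ENNReal.toReal_mono (by simp [hrne]) hAk
      simpa [ENNReal.toReal_pow, coe_nnnorm] using this
    have hent : |(B^k) j l| ≤ ‖A ^ k‖ := by
      have h1 : ‖(A ^ k) j l‖₊ ≤ ‖A ^ k‖₊ := by
        rw [Matrix.linfty_opNNNorm_def]
        exact le_trans (Finset.single_le_sum (f := fun m => ‖(A^k) j m‖₊)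
          (fun _ _ => zero_le) (Finset.mem_univ l))
          (Finset.le_sup (f := fun i => ∑ m, ‖(A^k) i m‖₊) (Finset.mem_univ j))
      have h2 : ‖(A ^ k) j l‖ = |(B^k) j l| := by
        rw [stmt13_map_pow]
        simp [Matrix.map_apply, Complex.norm_real, Real.norm_eq_abs]
      calc |(B^k) j l| = ‖(A ^ k) j l‖ := h2.symm
        _ ≤ ‖A ^ k‖ := by exact_mod_cast h1
    exact hent.trans hnorm
  have hpow : Tendsto (fun k : ℕ => s ^ k) atTop (nhds 0) :=
    tendsto_pow_atTop_nhds_zero_of_lt_one hs0 hs1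
  have hneg : Tendsto (fun k : ℕ => -(s ^ k)) atTop (nhds 0) := by simpa using hpow.neg
  refine tendsto_of_tendsto_of_tendsto_of_le_of_le' hneg hpow ?_ ?_
  · filter_upwards [hev2] with k hk; linarith [abs_le.mp hk]
  · filter_upwards [hev2] with k hk; linarith [abs_le.mp hk]

private lemma stmt13_isUnit_det {n : ℕ} (B : Matrix (Fin n) (Fin n) ℝ)
    (hBspec : ∀ z ∈ spectrum ℂ (B.map (Complex.ofReal ·)), ‖z‖ < 1) :
    IsUnit (1 - B).det := by
  set A := B.map (Complex.ofReal ·) with hA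
  have h1 : (1 : ℂ) ∉ spectrum ℂ A := fun h => by simpa using hBspec 1 h
  rw [spectrum.notMem_iff] at h1
  have h2 : IsUnit (1 - A) := by simpa using h1
  have h3 : (1 - A) = Complex.ofRealHom.mapMatrix (1 - B) := by
    simp [hA, RingHom.mapMatrix_apply, Matrix.map_sub]
    rfl
  have h4 : IsUnit (1 - A).det := (Matrix.isUnit_iff_isUnit_det _).mp h2
  rw [h3, ← RingHom.map_det] at h4
  have : ((1 - B).det : ℂ) ≠ 0 := h4.ne_zero
  exact isUnit_iff_ne_zero.mpr (by exact_mod_cast this)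

private lemma stmt13_fixed {n : ℕ} (B : Matrix (Fin n) (Fin n) ℝ) (hdet : IsUnit (1 - B).det)
    (v : Fin n → ℝ) :
    (1 - B)⁻¹.mulVec v = B.mulVec ((1 - B)⁻¹.mulVec v) + v := by
  have h : (1 - B).mulVec ((1 - B)⁻¹.mulVec v) = v := by
    rw [Matrix.mulVec_mulVec, Matrix.mul_nonsing_inv _ hdet, Matrix.one_mulVec]
  rw [Matrix.sub_mulVec, Matrix.one_mulVec, sub_eq_iff_eq_add] at h
  rw [add_comm] at h
  exact h

private lemma stmt13_mono {n : ℕ} (M : Matrix (Fin n) (Fin n) ℝ) (hM : ∀ j l, 0 ≤ M j l)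
    {u v : Fin n → ℝ} (huv : u ≤ v) : M.mulVec u ≤ M.mulVec v := by
  intro j
  simp only [Matrix.mulVec, dotProduct]
  exact Finset.sum_le_sum fun l _ => mul_le_mul_of_nonneg_left (huv l) (hM j l)

private lemma stmt13_pow_nonneg {n : ℕ} (B : Matrix (Fin n) (Fin n) ℝ)
    (hB0 : ∀ j l, 0 ≤ B j l) (k : ℕ) : ∀ j l, 0 ≤ (B^k) j l := by
  induction k with
  | zero => intro j l; by_cases h : j = l <;> simp [pow_zero, Matrix.one_apply, h]
  | succ k ih =>
    intro j l
    rw [pow_succ, Matrix.mul_apply]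
    exact Finset.sum_nonneg fun m _ => mul_nonneg (ih j m) (hB0 m l)

private lemma stmt13_le_zero {n : ℕ} (B : Matrix (Fin n) (Fin n) ℝ) (hB0 : ∀ j l, 0 ≤ B j l)
    (hpow : ∀ j l, Tendsto (fun k => (B^k) j l) atTop (nhds 0))
    {d : Fin n → ℝ} (hd : d ≤ B.mulVec d) : d ≤ 0 := by
  have hk : ∀ k, d ≤ (B^k).mulVec d := by
    intro k
    induction k with
    | zero => simp [pow_zero, Matrix.one_mulVec]
    | succ k ih =>
      calc d ≤ (B^k).mulVec d := ih
        _ ≤ (B^k).mulVec (B.mulVec d) := stmt13_mono _ (stmt13_pow_nonneg B hB0 k) hd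
        _ = (B^(k+1)).mulVec d := by rw [Matrix.mulVec_mulVec, ← pow_succ]
  intro j
  have hlim : Tendsto (fun k => ((B^k).mulVec d) j) atTop (nhds 0) := by
    have : Tendsto (fun k => ∑ l, (B^k) j l * d l) atTop (nhds (∑ l : Fin n, 0 * d l)) :=
      tendsto_finset_sum _ fun l _ => (hpow j l).mul_const (d l)
    simpa [Matrix.mulVec, dotProduct] using this
  exact ge_of_tendsto' hlim fun k => hk k j

/-- Sandwich recursion `B x_{i-1} + c_i − γ1 ⪯ x_i ⪯ B x_{i-1} + c_i + γ1`
with `B ⪰ 0`, `ρ(B) < 1`, `x_i ∈ [0,1]^n`, `c_i → c` implies the entrywise bounds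
`limsup x ⪯ (I−B)⁻¹ c + γ (I−B)⁻¹ 1` and `liminf x ⪰ (I−B)⁻¹ c − γ (I−B)⁻¹ 1`. -/
theorem stmt_13 {n : ℕ} (B : Matrix (Fin n) (Fin n) ℝ)
    (hB0 : ∀ j l, 0 ≤ B j l)
    (hBspec : ∀ z ∈ spectrum ℂ (B.map (Complex.ofReal ·)), ‖z‖ < 1)
    (γ : ℝ) (hγ : 0 ≤ γ)
    (c : ℕ → Fin n → ℝ) (cl : Fin n → ℝ)
    (hc : Tendsto c atTop (nhds cl))
    (x : ℕ → Fin n → ℝ) (hx01 : ∀ i j, x i j ∈ Set.Icc (0 : ℝ) 1)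
    (hrec : ∀ i : ℕ, 1 ≤ i →
      B.mulVec (x (i - 1)) + c i - γ • (1 : Fin n → ℝ) ≤ x i ∧
      x i ≤ B.mulVec (x (i - 1)) + c i + γ • (1 : Fin n → ℝ)) :
    ∀ j : Fin n,
      limsup (fun i => x i j) atTop ≤
        ((1 - B)⁻¹.mulVec cl) j + γ * ((1 - B)⁻¹.mulVec (1 : Fin n → ℝ)) j ∧
      ((1 - B)⁻¹.mulVec cl) j - γ * ((1 - B)⁻¹.mulVec (1 : Fin n → ℝ)) j ≤
        liminf (fun i => x i j) atTop := by
  intro j₀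
  haveI : Nonempty (Fin n) := ⟨j₀⟩
  have hdet := stmt13_isUnit_det B hBspec
  have hpow := stmt13_pow_tendsto B hBspec
  set L : Fin n → ℝ := fun l => limsup (fun i => x i l) atTop with hLdef
  set m : Fin n → ℝ := fun l => liminf (fun i => x i l) atTop with hmdef
  have hba : ∀ l, IsBoundedUnder (· ≤ ·) atTop (fun i => x i l) :=
    fun l => isBoundedUnder_of ⟨1, fun i => (hx01 i l).2⟩
  have hbb : ∀ l, IsBoundedUnder (· ≥ ·) atTop (fun i => x i l) :=
    fun l => isBoundedUnder_of ⟨0, fun i => (hx01 i l).1⟩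
  have hcj : ∀ j, Tendsto (fun i => c i j) atTop (nhds (cl j)) :=
    fun j => ((continuous_apply j).tendsto cl).comp hc
  -- Step 1: limsup vector inequality
  have hLle : ∀ j, L j ≤ (B.mulVec L) j + cl j + γ := by
    intro j
    apply stmt13_le_add
    intro ε hε
    set S : ℝ := ∑ l, B j l with hSdef
    have hS0 : 0 ≤ S := Finset.sum_nonneg fun l _ => hB0 j l
    set ε' : ℝ := ε / (S + 1) with hε'def
    have hε' : 0 < ε' := div_pos hε (by linarith)
    have ev1 : ∀ᶠ i in atTop, ∀ l, x i l < L l + ε' :=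
      eventually_all.mpr fun l =>
        eventually_lt_of_limsup_lt (by simp only [hLdef]; linarith) (hba l)
    have ev1' : ∀ᶠ i in atTop, ∀ l, x (i - 1) l < L l + ε' :=
      (tendsto_sub_atTop_nat 1).eventually ev1
    have ev2 : ∀ᶠ i in atTop, c i j < cl j + ε' :=
      (hcj j).eventually_lt_const (by linarith)
    have key : ∀ᶠ i in atTop,
        x i j ≤ (B.mulVec L) j + cl j + γ + ε := by
      filter_upwards [ev1', ev2, eventually_ge_atTop 1] with i h1 h2 h3
      have hr := (hrec i h3).2 j
      simp only [Pi.add_apply, Pi.smul_apply, Pi.one_apply, smul_eq_mul, mul_one] at hr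
      have hsum : (B.mulVec (x (i - 1))) j ≤ (B.mulVec L) j + S * ε' := by
        have hterm : ∀ l ∈ Finset.univ, B j l * x (i - 1) l ≤ B j l * (L l + ε') :=
          fun l _ => mul_le_mul_of_nonneg_left (h1 l).le (hB0 j l)
        have h4 := Finset.sum_le_sum hterm
        simp only [Matrix.mulVec, dotProduct]
        calc ∑ l, B j l * x (i - 1) l ≤ ∑ l, B j l * (L l + ε') := h4
          _ = ∑ l, B j l * L l + (∑ l, B j l) * ε' := by
              rw [Finset.sum_mul, ← Finset.sum_add_distrib]; congr 1; funext l; ring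
          _ = ∑ l, B j l * L l + S * ε' := by rw [hSdef]
      have hε'eq : (S + 1) * ε' = ε := by
        rw [hε'def]; field_simp
      nlinarith [hsum, hr, h2]
    exact limsup_le_of_le ((hbb j).isCoboundedUnder_le) key
  -- Step 1': liminf vector inequality
  have hmge : ∀ j, (B.mulVec m) j + cl j - γ ≤ m j := by
    intro j
    apply stmt13_le_add
    intro ε hε
    rw [show (B.mulVec m) j + cl j - γ ≤ m j + ε ↔
        (B.mulVec m) j + cl j - γ - ε ≤ m j from by constructor <;> intro <;> linarith]
    set S : ℝ := ∑ l, B j l with hSdef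
    have hS0 : 0 ≤ S := Finset.sum_nonneg fun l _ => hB0 j l
    set ε' : ℝ := ε / (S + 1) with hε'def
    have hε' : 0 < ε' := div_pos hε (by linarith)
    have ev1 : ∀ᶠ i in atTop, ∀ l, m l - ε' < x i l :=
      eventually_all.mpr fun l =>
        eventually_lt_of_lt_liminf (by simp only [hmdef]; linarith) (hbb l)
    have ev1' : ∀ᶠ i in atTop, ∀ l, m l - ε' < x (i - 1) l :=
      (tendsto_sub_atTop_nat 1).eventually ev1
    have ev2 : ∀ᶠ i in atTop, cl j - ε' < c i j :=
      (hcj j).eventually_const_lt (by linarith)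
    have key : ∀ᶠ i in atTop,
        (B.mulVec m) j + cl j - γ - ε ≤ x i j := by
      filter_upwards [ev1', ev2, eventually_ge_atTop 1] with i h1 h2 h3
      have hr := (hrec i h3).1 j
      simp only [Pi.sub_apply, Pi.add_apply, Pi.smul_apply, Pi.one_apply, smul_eq_mul,
        mul_one] at hr
      have hsum : (B.mulVec m) j - S * ε' ≤ (B.mulVec (x (i - 1))) j := by
        have hterm : ∀ l ∈ Finset.univ, B j l * (m l - ε') ≤ B j l * x (i - 1) l :=
          fun l _ => mul_le_mul_of_nonneg_left (h1 l).le (hB0 j l)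
        have h4 := Finset.sum_le_sum hterm
        simp only [Matrix.mulVec, dotProduct]
        calc ∑ l, B j l * m l - S * ε'
            = ∑ l, B j l * (m l - ε') := by
              rw [hSdef, Finset.sum_mul, ← Finset.sum_sub_distrib]; congr 1; funext l; ring
          _ ≤ ∑ l, B j l * x (i - 1) l := h4
      have hε'eq : (S + 1) * ε' = ε := by
        rw [hε'def]; field_simp
      nlinarith [hsum, hr, h2]
    exact le_liminf_of_le ((hba j).isCoboundedUnder_ge) key
  -- Step 2: compare with fixed points
  constructor
  · set u : Fin n → ℝ := (1 - B)⁻¹.mulVec (cl + γ • (1 : Fin n → ℝ)) with hudef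
    have hu := stmt13_fixed B hdet (cl + γ • (1 : Fin n → ℝ))
    have hd : L - u ≤ B.mulVec (L - u) := by
      intro j
      have h1 := hLle j
      have h2 := congrFun hu j
      simp only [Pi.add_apply, Pi.smul_apply, Pi.one_apply, smul_eq_mul, mul_one] at h2
      rw [Matrix.mulVec_sub]
      simp only [Pi.sub_apply]
      rw [← hudef] at h2
      linarith
    have hL0 := stmt13_le_zero B hB0 hpow hd j₀
    simp only [Pi.sub_apply, Pi.zero_apply, sub_nonpos] at hL0
    have huexp : u j₀ = ((1 - B)⁻¹.mulVec cl) j₀ + γ * ((1 - B)⁻¹.mulVec (1 : Fin n → ℝ)) j₀ := by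
      rw [hudef, Matrix.mulVec_add, Matrix.mulVec_smul]
      simp
    rw [huexp] at hL0
    exact hL0
  · set u : Fin n → ℝ := (1 - B)⁻¹.mulVec (cl - γ • (1 : Fin n → ℝ)) with hudef
    have hu := stmt13_fixed B hdet (cl - γ • (1 : Fin n → ℝ))
    have hd : u - m ≤ B.mulVec (u - m) := by
      intro j
      have h1 := hmge j
      have h2 := congrFun hu j
      simp only [Pi.sub_apply, Pi.add_apply, Pi.smul_apply, Pi.one_apply, smul_eq_mul,
        mul_one] at h2
      rw [Matrix.mulVec_sub]
      simp only [Pi.sub_apply]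
      rw [← hudef] at h2
      linarith
    have hL0 := stmt13_le_zero B hB0 hpow hd j₀
    simp only [Pi.sub_apply, Pi.zero_apply, sub_nonpos] at hL0
    have huexp : u j₀ = ((1 - B)⁻¹.mulVec cl) j₀ - γ * ((1 - B)⁻¹.mulVec (1 : Fin n → ℝ)) j₀ := by
      rw [hudef, Matrix.mulVec_sub, Matrix.mulVec_smul]
      simp
    rw [huexp] at hL0
    exact hL0
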